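/- arXiv:2403.16565 — 2 statements merged into one kernel-verified Lean document; each statement's English description precedes it below -/
import Mathlib

section
/- Let Π = [[Π₁₁, Π₁₂],[Π₂₁, Π₂₂]] ∈ S^{q+r} with Π₂₂ ≺ 0. Then the set Z_r(Π) = { Z ∈ ℝ^{r×q} : [I; Z]ᵀ Π [I; Z] ⪰ 0 } is bounded. (Indeed, every Z ∈ Z_r(Π) satisfies a quadratic bound determined by Π.) -/
open Matrix

lemma psd_cauchy_schwarz {n : ℕ} (M : Matrix (Fin n) (Fin n) ℝ) (hM : M.PosSemidef)
    (x y : Fin n → ℝ) : (x ⬝ᵥ M *ᵥ y)^2 ≤ (x ⬝ᵥ M *ᵥ x) * (y ⬝ᵥ M *ᵥ y) := by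
  have hT : Mᵀ = M := by simpa using hM.1.eq
  have hsym : ∀ a b : Fin n → ℝ, a ⬝ᵥ M *ᵥ b = b ⬝ᵥ M *ᵥ a := by
    intro a b
    rw [dotProduct_mulVec, ← mulVec_transpose, hT, dotProduct_comm]
  have key : ∀ t : ℝ, 0 ≤ (y ⬝ᵥ M *ᵥ y) * (t * t) + (2 * (x ⬝ᵥ M *ᵥ y)) * t + (x ⬝ᵥ M *ᵥ x) := by
    intro t
    have h0 := hM.dotProduct_mulVec_nonneg (x + t • y)
    simp only [star_trivial] at h0
    have expand : (x + t • y) ⬝ᵥ M *ᵥ (x + t • y)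
        = (y ⬝ᵥ M *ᵥ y) * (t * t) + (2 * (x ⬝ᵥ M *ᵥ y)) * t + (x ⬝ᵥ M *ᵥ x) := by
      simp only [mulVec_add, mulVec_smul, dotProduct_add, add_dotProduct, dotProduct_smul,
        smul_dotProduct, smul_eq_mul]
      linear_combination t * hsym y x
    linarith [expand ▸ h0]
  have hd := discrim_le_zero key
  rw [discrim] at hd
  nlinarith [hd]

lemma sq_bound {u A B : ℝ} (hu : 0 ≤ u) (hA : 0 ≤ A) (hB : 0 ≤ B)
    (h : u ^ 2 ≤ A + B * u) : u ≤ 1 + A + B := by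
  by_contra h'
  push_neg at h'
  nlinarith


/-- if `Π₂₂ ≺ 0`, the feasible set
`Z_r(Π) = { Z : [I; Z]ᵀ Π [I; Z] ⪰ 0 }` is bounded: there is `C ≥ 0` bounding all
entries of every feasible `Z`. -/
theorem QMI_feasibleSet_bounded
    (q r : ℕ) (P11 : Matrix (Fin q) (Fin q) ℝ) (P12 : Matrix (Fin q) (Fin r) ℝ)
    (P22 : Matrix (Fin r) (Fin r) ℝ)
    (hP11 : P11.IsSymm) (hP22 : (-P22).PosDef) :
    ∃ C : ℝ, 0 ≤ C ∧ ∀ Z : Matrix (Fin r) (Fin q) ℝ,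
      ((Matrix.fromRows (1 : Matrix (Fin q) (Fin q) ℝ) Z)ᵀ *
          Matrix.fromBlocks P11 P12 P12ᵀ P22 *
          Matrix.fromRows (1 : Matrix (Fin q) (Fin q) ℝ) Z).PosSemidef →
      ∀ i j, |Z i j| ≤ C := by
  set M : Matrix (Fin r) (Fin r) ℝ := -P22 with hMdef
  have hMpsd : M.PosSemidef := hP22.posSemidef
  have hMinv : M⁻¹.PosSemidef := hP22.inv.posSemidef
  have hMdet : IsUnit M.det := hP22.det_pos.ne'.isUnit
  -- constants
  set a : ℝ := ∑ j, |P11 j j| with ha_def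
  set K : ℝ := ∑ j, ∑ i, |P12 j i| with hK_def
  set d : ℝ := ∑ i, M⁻¹ i i with hd_def
  have hdiag : ∀ i, 0 ≤ M⁻¹ i i := by
    intro i
    have := hMinv.dotProduct_mulVec_nonneg (Pi.single i 1)
    simpa [mulVec_single, single_dotProduct] using this
  have hd0 : 0 ≤ d := Finset.sum_nonneg fun i _ => hdiag i
  have ha0 : 0 ≤ a := Finset.sum_nonneg fun _ _ => abs_nonneg _
  have hK0 : 0 ≤ K := Finset.sum_nonneg fun _ _ => Finset.sum_nonneg fun _ _ => abs_nonneg _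
  set s : ℝ := Real.sqrt d with hs_def
  have hs0 : 0 ≤ s := Real.sqrt_nonneg d
  refine ⟨s * (1 + a + 2 * K * s), by positivity, ?_⟩
  intro Z hfeas i j
  set v : Fin r → ℝ := fun i => Z i j with hv
  set e : Fin q → ℝ := Pi.single j 1 with he
  -- feasibility at e_j
  have hBe : (fromRows (1 : Matrix (Fin q) (Fin q) ℝ) Z) *ᵥ e = Sum.elim e v := by
    rw [fromRows_mulVec, one_mulVec]
    congr 1
    funext k
    simp [he, mulVec_single, hv]
  have h0 := hfeas.dotProduct_mulVec_nonneg e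
  rw [star_trivial, ← Matrix.mulVec_mulVec, ← Matrix.mulVec_mulVec, hBe,
    dotProduct_mulVec, vecMul_transpose, hBe, fromBlocks_mulVec,
    sumElim_dotProduct_sumElim] at h0
  simp only [Sum.elim_comp_inl, Sum.elim_comp_inr] at h0
  have he1 : e ⬝ᵥ (P11 *ᵥ e + P12 *ᵥ v) = P11 j j + (P12 *ᵥ v) j := by
    simp [he, single_dotProduct, mulVec_single]
  have he2 : v ⬝ᵥ (P12ᵀ *ᵥ e + P22 *ᵥ v) = (P12 *ᵥ v) j + v ⬝ᵥ P22 *ᵥ v := by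
    rw [dotProduct_add]
    congr 1
    rw [dotProduct_mulVec, vecMul_transpose, dotProduct_comm]
    simp [he, single_dotProduct]
  rw [he1, he2] at h0
  set S : ℝ := v ⬝ᵥ M *ᵥ v with hS_def
  have hSP : v ⬝ᵥ P22 *ᵥ v = -S := by
    rw [hS_def, hMdef, neg_mulVec, dotProduct_neg, neg_neg]
  rw [hSP] at h0
  have hS0 : 0 ≤ S := by simpa [star_trivial] using hMpsd.dotProduct_mulVec_nonneg v
  -- Cauchy-Schwarz: (v i)^2 ≤ S * d
  have hcs : ∀ k : Fin r, (v k) ^ 2 ≤ S * d := by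
    intro k
    set y : Fin r → ℝ := M⁻¹ *ᵥ Pi.single k 1 with hy
    have hMy : M *ᵥ y = Pi.single k 1 := by
      rw [hy, Matrix.mulVec_mulVec, Matrix.mul_nonsing_inv _ hMdet, one_mulVec]
    have h1 := psd_cauchy_schwarz M hMpsd v y
    rw [hMy] at h1
    have h2 : v ⬝ᵥ Pi.single k 1 = v k := by simp [dotProduct_single]
    have h3 : y ⬝ᵥ Pi.single k 1 = M⁻¹ k k := by simp [hy, dotProduct_single, mulVec_single]
    rw [h2, h3] at h1
    have h4 : M⁻¹ k k ≤ d := Finset.single_le_sum (fun i _ => hdiag i) (Finset.mem_univ k)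
    calc (v k) ^ 2 ≤ S * M⁻¹ k k := h1
      _ ≤ S * d := mul_le_mul_of_nonneg_left h4 hS0
  set u : ℝ := Real.sqrt S with hu_def
  have hu0 : 0 ≤ u := Real.sqrt_nonneg S
  have hu2 : u ^ 2 = S := Real.sq_sqrt hS0
  have hvk : ∀ k, |v k| ≤ s * u := by
    intro k
    have := Real.sqrt_le_sqrt (hcs k)
    rwa [Real.sqrt_sq_eq_abs, Real.sqrt_mul hS0, ← hu_def, mul_comm, ← hs_def] at this
  -- linear bound
  have hlin : (P12 *ᵥ v) j ≤ K * (s * u) := by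
    have h1 : (P12 *ᵥ v) j = ∑ k, P12 j k * v k := rfl
    rw [h1]
    calc ∑ k, P12 j k * v k ≤ ∑ k, |P12 j k| * (s * u) := by
          apply Finset.sum_le_sum
          intro k _
          calc P12 j k * v k ≤ |P12 j k * v k| := le_abs_self _
            _ = |P12 j k| * |v k| := abs_mul _ _
            _ ≤ |P12 j k| * (s * u) := mul_le_mul_of_nonneg_left (hvk k) (abs_nonneg _)
      _ = (∑ k, |P12 j k|) * (s * u) := by rw [Finset.sum_mul]
      _ ≤ K * (s * u) := by
          apply mul_le_mul_of_nonneg_right _ (by positivity)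
          exact Finset.single_le_sum (f := fun j' => ∑ i', |P12 j' i'|)
            (fun j' _ => Finset.sum_nonneg fun _ _ => abs_nonneg _) (Finset.mem_univ j)
  have hP11jj : P11 j j ≤ a := (le_abs_self _).trans
    (Finset.single_le_sum (f := fun j' => |P11 j' j'|) (fun _ _ => abs_nonneg _) (Finset.mem_univ j))
  -- combine:  S ≤ P11 j j + 2 (P12 v)_j
  have hmain : u ^ 2 ≤ a + (2 * K * s) * u := by
    rw [hu2]
    have : S ≤ P11 j j + 2 * (P12 *ᵥ v) j := by linarith
    calc S ≤ P11 j j + 2 * (P12 *ᵥ v) j := this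
      _ ≤ a + 2 * (K * (s * u)) := by linarith
      _ = a + (2 * K * s) * u := by ring
  have hub : u ≤ 1 + a + 2 * K * s := sq_bound hu0 ha0 (by positivity) hmain
  calc |Z i j| = |v i| := rfl
    _ ≤ s * u := hvk i
    _ ≤ s * (1 + a + 2 * K * s) := mul_le_mul_of_nonneg_left hub hs0
end

section
/- Consistency-set QMI: Let X₊ ∈ ℝ^{n×N}, Φ ∈ ℝ^{d×N}, and Π ∈ S^{n+N}. Define Υ := [[I, X₊],[0, -Φ]] Π [[I, X₊],[0, -Φ]]ᵀ. Then for any Θ ∈ ℝ^{n×d}, the noise matrix W := X₊ - ΘΦ satisfies [I; Wᵀ]ᵀ Π [I; Wᵀ] ⪰ 0 if and only if [I; Θᵀ]ᵀ Υ [I; Θᵀ] ⪰ 0. -/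
open Matrix

lemma key (n N d : ℕ) (Xp : Matrix (Fin n) (Fin N) ℝ) (Φ : Matrix (Fin d) (Fin N) ℝ)
    (Θ : Matrix (Fin n) (Fin d) ℝ) :
    (Matrix.fromBlocks (1 : Matrix (Fin n) (Fin n) ℝ) Xp 0 (-Φ))ᵀ *
      Matrix.fromRows (1 : Matrix (Fin n) (Fin n) ℝ) Θᵀ =
    Matrix.fromRows (1 : Matrix (Fin n) (Fin n) ℝ) (Xp - Θ * Φ)ᵀ := by
  rw [fromBlocks_transpose, fromBlocks_mul_fromRows]
  simp [Matrix.transpose_sub, Matrix.transpose_mul, sub_eq_add_neg, add_comm]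

/-- consistency-set QMI: with `Υ := [[I, X₊],[0, -Φ]] Π [[I, X₊],[0, -Φ]]ᵀ`,
for any `Θ`, the noise `W := X₊ - Θ Φ` satisfies `[I; Wᵀ]ᵀ Π [I; Wᵀ] ⪰ 0` iff
`[I; Θᵀ]ᵀ Υ [I; Θᵀ] ⪰ 0`. -/
theorem consistency_QMI
    (n N d : ℕ) (Xp : Matrix (Fin n) (Fin N) ℝ) (Φ : Matrix (Fin d) (Fin N) ℝ)
    (Pi : Matrix (Fin n ⊕ Fin N) (Fin n ⊕ Fin N) ℝ) (hPi : Pi.IsSymm)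
    (Θ : Matrix (Fin n) (Fin d) ℝ) :
    ((Matrix.fromRows (1 : Matrix (Fin n) (Fin n) ℝ) (Xp - Θ * Φ)ᵀ)ᵀ * Pi *
        Matrix.fromRows (1 : Matrix (Fin n) (Fin n) ℝ) (Xp - Θ * Φ)ᵀ).PosSemidef ↔
    ((Matrix.fromRows (1 : Matrix (Fin n) (Fin n) ℝ) Θᵀ)ᵀ *
        (Matrix.fromBlocks (1 : Matrix (Fin n) (Fin n) ℝ) Xp 0 (-Φ) * Pi *
          (Matrix.fromBlocks (1 : Matrix (Fin n) (Fin n) ℝ) Xp 0 (-Φ))ᵀ) *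
        Matrix.fromRows (1 : Matrix (Fin n) (Fin n) ℝ) Θᵀ).PosSemidef := by
  have h := key n N d Xp Φ Θ
  have heq : (Matrix.fromRows (1 : Matrix (Fin n) (Fin n) ℝ) Θᵀ)ᵀ *
        (Matrix.fromBlocks (1 : Matrix (Fin n) (Fin n) ℝ) Xp 0 (-Φ) * Pi *
          (Matrix.fromBlocks (1 : Matrix (Fin n) (Fin n) ℝ) Xp 0 (-Φ))ᵀ) *
        Matrix.fromRows (1 : Matrix (Fin n) (Fin n) ℝ) Θᵀ =
      (Matrix.fromRows (1 : Matrix (Fin n) (Fin n) ℝ) (Xp - Θ * Φ)ᵀ)ᵀ * Pi *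
        Matrix.fromRows (1 : Matrix (Fin n) (Fin n) ℝ) (Xp - Θ * Φ)ᵀ := by
    rw [← h, Matrix.transpose_mul, Matrix.transpose_transpose]
    simp only [Matrix.mul_assoc]
  rw [heq]
end
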